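/- Every commutative semilocal ring (a commutative ring with only finitely many maximal ideals) is an SE₂ ring: every unimodular 2×2 matrix over it is simply extendable. -/

import Mathlib

open Matrix

/-- A `2 × 2` matrix is unimodular if its four entries generate the unit ideal. -/
def Unimodular2 {R : Type*} [CommRing R] (A : Matrix (Fin 2) (Fin 2) R) : Prop :=
  Ideal.span {A 0 0, A 0 1, A 1 0, A 1 1} = ⊤

/-- A `2 × 2` matrix is extendable if it is the top-left block of a `3 × 3` matrix
of determinant `1`. -/
def Extendable {R : Type*} [CommRing R] (A : Matrix (Fin 2) (Fin 2) R) : Prop :=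
  ∃ B : Matrix (Fin 3) (Fin 3) R, B.det = 1 ∧
    ∀ i j : Fin 2, B i.castSucc j.castSucc = A i j

/-- A `2 × 2` matrix is simply extendable if it is the top-left block of a `3 × 3` matrix
of determinant `1` whose `(3,3)` entry is `0`. -/
def SimplyExtendable {R : Type*} [CommRing R] (A : Matrix (Fin 2) (Fin 2) R) : Prop :=
  ∃ B : Matrix (Fin 3) (Fin 3) R, B.det = 1 ∧
    (∀ i j : Fin 2, B i.castSucc j.castSucc = A i j) ∧ B 2 2 = 0


private lemma crt_surj {R : Type*} [CommRing R] {ι : Type*} [Finite ι]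
    (f : ι → Ideal R) (hmax : ∀ i, (f i).IsMaximal) (hinj : Function.Injective f)
    (g : ∀ i, R ⧸ f i) : ∃ t : R, ∀ i, Ideal.Quotient.mk (f i) t = g i := by
  have hpair : Pairwise (Function.onFun IsCoprime f) := fun i j hij =>
    Ideal.isCoprime_iff_sup_eq.mpr
      (Ideal.IsMaximal.coprime_of_ne (hmax i) (hmax j) (fun h => hij (hinj h)))
  obtain ⟨q, hq⟩ := Ideal.quotientInfToPiQuotient_surj hpair g
  obtain ⟨t, rfl⟩ := Ideal.Quotient.mk_surjective q
  exact ⟨t, fun i => by rw [← Ideal.quotientInfToPiQuotient_mk' f t i, hq]⟩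

private lemma key {R : Type*} [CommRing R]
    (hsemilocal : {I : Ideal R | I.IsMaximal}.Finite) (p q r s : R)
    (h : Ideal.span {p, q, r, s} = ⊤) :
    ∃ x y z w : R, p*x*z + q*x*w + r*y*z + s*y*w = 1 := by
  rcases subsingleton_or_nontrivial R with hR | hR
  · exact ⟨0, 0, 0, 0, Subsingleton.elim _ _⟩
  · set ι := {I : Ideal R // I.IsMaximal} with hι
    haveI : Finite ι := hsemilocal.to_subtype
    -- choose per maximal ideal patterns
    have hgen : ∀ i : ι, ∃ X Y Z W : R,
        p*X*Z + q*X*W + r*Y*Z + s*Y*W ∉ i.1 := by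
      intro i
      by_contra hc
      push_neg at hc
      have hp : p ∈ i.1 := by simpa using hc 1 0 1 0
      have hq' : q ∈ i.1 := by simpa using hc 1 0 0 1
      have hr : r ∈ i.1 := by simpa using hc 0 1 1 0
      have hs : s ∈ i.1 := by simpa using hc 0 1 0 1
      have : Ideal.span {p, q, r, s} ≤ i.1 := by
        rw [Ideal.span_le]
        intro t ht
        simp only [Set.mem_insert_iff, Set.mem_singleton_iff] at ht
        rcases ht with rfl | rfl | rfl | rfl <;> assumption
      rw [h] at this
      exact i.2.ne_top (top_le_iff.mp this)
    choose X Y Z W hXYZW using hgen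
    obtain ⟨x, hx⟩ := crt_surj (fun i : ι => i.1) (fun i => i.2) Subtype.val_injective
      (fun i => Ideal.Quotient.mk i.1 (X i))
    obtain ⟨y, hy⟩ := crt_surj (fun i : ι => i.1) (fun i => i.2) Subtype.val_injective
      (fun i => Ideal.Quotient.mk i.1 (Y i))
    obtain ⟨z, hz⟩ := crt_surj (fun i : ι => i.1) (fun i => i.2) Subtype.val_injective
      (fun i => Ideal.Quotient.mk i.1 (Z i))
    obtain ⟨w, hw⟩ := crt_surj (fun i : ι => i.1) (fun i => i.2) Subtype.val_injective
      (fun i => Ideal.Quotient.mk i.1 (W i))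
    have hunit : IsUnit (p*x*z + q*x*w + r*y*z + s*y*w) := by
      by_contra hnu
      obtain ⟨M, hM, htM⟩ := exists_max_ideal_of_mem_nonunits (mem_nonunits_iff.mpr hnu)
      set i : ι := ⟨M, hM⟩
      have h0 : Ideal.Quotient.mk M (p*x*z + q*x*w + r*y*z + s*y*w) = 0 :=
        Ideal.Quotient.eq_zero_iff_mem.mpr htM
      have h1 : Ideal.Quotient.mk M (p*(X i)*(Z i) + q*(X i)*(W i) + r*(Y i)*(Z i)
          + s*(Y i)*(W i)) = 0 := by
        rw [← h0]
        simp only [map_add, _root_.map_mul,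
          (show Ideal.Quotient.mk M x = Ideal.Quotient.mk M (X i) from hx i),
          (show Ideal.Quotient.mk M y = Ideal.Quotient.mk M (Y i) from hy i),
          (show Ideal.Quotient.mk M z = Ideal.Quotient.mk M (Z i) from hz i),
          (show Ideal.Quotient.mk M w = Ideal.Quotient.mk M (W i) from hw i)]
      exact hXYZW i (Ideal.Quotient.eq_zero_iff_mem.mp h1)
    obtain ⟨v, hv⟩ := hunit.exists_right_inv
    exact ⟨x * v, y * v, z, w, by linear_combination hv⟩

private theorem stmt18_aux (R : Type*) [CommRing R]
    (hsemilocal : {I : Ideal R | I.IsMaximal}.Finite) :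
    ∀ A : Matrix (Fin 2) (Fin 2) R,
      Ideal.span {A 0 0, A 0 1, A 1 0, A 1 1} = ⊤ →
      ∃ B : Matrix (Fin 3) (Fin 3) R, B.det = 1 ∧
        (∀ i j : Fin 2, B i.castSucc j.castSucc = A i j) ∧ B 2 2 = 0 := by
  intro A hA
  set a := A 0 0 with ha; set b := A 0 1 with hb
  set c := A 1 0 with hc; set d := A 1 1 with hd
  have hspan : Ideal.span ({-d, c, b, -a} : Set R) = ⊤ := by
    rw [eq_top_iff, ← hA, Ideal.span_le]
    intro t ht
    simp only [Set.mem_insert_iff, Set.mem_singleton_iff] at ht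
    rcases ht with rfl | rfl | rfl | rfl
    · have h' : (-a) ∈ Ideal.span ({-d, c, b, -a} : Set R) := Ideal.subset_span (by simp)
      simpa using neg_mem h'
    · exact Ideal.subset_span (by simp)
    · exact Ideal.subset_span (by simp)
    · have h' : (-d) ∈ Ideal.span ({-d, c, b, -a} : Set R) := Ideal.subset_span (by simp)
      simpa using neg_mem h'
  obtain ⟨x, y, z, w, hkey⟩ := key hsemilocal (-d) c b (-a) hspan
  refine ⟨!![a, b, x; c, d, y; z, w, 0], ?_, ?_, rfl⟩
  · simp only [Matrix.det_fin_three, Matrix.cons_val', Matrix.cons_val_zero, Matrix.cons_val_one,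
      Matrix.head_cons, Matrix.empty_val', Matrix.cons_val_fin_one, Matrix.head_fin_const,
      Matrix.cons_val_two, Matrix.tail_cons, Matrix.of_apply]
    linear_combination hkey
  · intro i j
    fin_cases i <;> fin_cases j <;> rfl

theorem stmt18 (R : Type*) [CommRing R]
    (hsemilocal : {I : Ideal R | I.IsMaximal}.Finite) :
    ∀ A : Matrix (Fin 2) (Fin 2) R, Unimodular2 A → SimplyExtendable A := by
  intro A hA
  exact stmt18_aux R hsemilocal A hA
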